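/- Fix k ≥ 1. For every weight vector λ = (λ_1,…,λ_k) with λ_j ≥ 0 and Σ_{j=1}^k λ_j = 1, there exist numbers e^1,…,e^k ∈ {0,1} with max_j e^j = 1 and Σ_{j=1}^k λ_j·e^j ≤ 1/k, such that: if the candidate test martingales are defined by taking first factor e^j and all subsequent factors equal to 1 (so W_t^j = e^j for all t ≥ 1), and the mixture martingale by Ŵ_t := Π_{s=1}^t Σ_j λ_{s,j}·e_s^j with first-round weights λ_{1,·} = λ (so Ŵ_t = Σ_j λ_j e^j for all t ≥ 1), then max_{1≤j≤k} log W_t^j − log Ŵ_t ≥ log k for every t ≥ 1. Consequently, log k is the tightest uniform regret bound achievable by any strategy that forms predictable convex combinations of k candidate sequential e-values. -/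

import Mathlib

open scoped BigOperators

/-- Extended-real logarithm, with `log x = -∞` for `x ≤ 0`. -/
noncomputable def elog (x : ℝ) : EReal := if x ≤ 0 then ⊥ else ((Real.log x : ℝ) : EReal)

/-- For every convex weight vector `λ` over `k` candidates there are
first-round e-values `e^1,…,e^k ∈ {0,1}` with `max_j e^j = 1` and `Σ_j λ_j e^j ≤ 1/k`
such that, taking all subsequent e-value factors equal to `1` (so the candidate
martingales satisfy `W_t^j = e^j` and the mixture martingale satisfies
`Ŵ_t = Σ_j λ_j e^j` for all `t ≥ 1`), the regret satisfies
`max_j log W_t^j − log Ŵ_t ≥ log k` for every `t ≥ 1` (in extended reals, with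
`log 0 = −∞`). Hence `log k` is the tightest uniform regret bound for predictable
convex-combination strategies. -/
theorem stmt_13 (k : ℕ) (hk : 1 ≤ k)
    (lam : Fin k → ℝ) (hlamnn : ∀ j, 0 ≤ lam j) (hlamsum : ∑ j, lam j = 1) :
    ∃ e : Fin k → ℝ,
      (∀ j, e j = 0 ∨ e j = 1) ∧ (∃ j, e j = 1) ∧ (∑ j, lam j * e j ≤ 1 / (k : ℝ)) ∧
      ∀ (W : ℕ → Fin k → ℝ) (Wmix : ℕ → ℝ),
        (∀ t j, 1 ≤ t → W t j = e j) → (∀ t, 1 ≤ t → Wmix t = ∑ j, lam j * e j) →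
        ∀ t : ℕ, 1 ≤ t →
          ((Real.log k : ℝ) : EReal) ≤
            (Finset.univ.sup'
                (Finset.univ_nonempty_iff.mpr (Fin.pos_iff_nonempty.mp hk))
                (fun j => elog (W t j)))
              - elog (Wmix t) := by
  have hkpos : (0:ℝ) < k := by exact_mod_cast hk
  -- find j0 with lam j0 ≤ 1/k
  obtain ⟨j0, hj0⟩ : ∃ j, lam j ≤ 1 / (k:ℝ) := by
    by_contra h
    push_neg at h
    have : (1:ℝ) < ∑ j, lam j := by
      calc (1:ℝ) = ∑ _j : Fin k, 1/(k:ℝ) := by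
            rw [Finset.sum_const, Finset.card_univ, Fintype.card_fin, nsmul_eq_mul]
            field_simp
        _ < ∑ j, lam j := by
            refine Finset.sum_lt_sum_of_nonempty ?_ fun j _ => h j
            exact Finset.univ_nonempty_iff.mpr (Fin.pos_iff_nonempty.mp hk)
    linarith
  refine ⟨fun j => if j = j0 then 1 else 0, fun j => by by_cases h : j = j0 <;> simp [h],
    ⟨j0, by simp⟩, ?_, ?_⟩
  · have : ∑ j, lam j * (if j = j0 then (1:ℝ) else 0) = lam j0 := by
      rw [Finset.sum_eq_single j0] <;> simp_all
    rw [this]; exact hj0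
  · intro W Wmix hW hWmix t ht
    have hs : ∑ j, lam j * (if j = j0 then (1:ℝ) else 0) = lam j0 := by
      rw [Finset.sum_eq_single j0] <;> simp_all
    have hsup : (Finset.univ.sup'
        (Finset.univ_nonempty_iff.mpr (Fin.pos_iff_nonempty.mp hk))
        (fun j => elog (W t j))) = 0 := by
      apply le_antisymm
      · apply Finset.sup'_le
        intro j _
        rw [hW t j ht]
        by_cases h : j = j0 <;> norm_num [h, elog]
      · refine le_trans ?_ (Finset.le_sup' _ (Finset.mem_univ j0))
        rw [hW t j0 ht]
        norm_num [elog]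
    rw [hsup, hWmix t ht, hs]
    by_cases h0 : lam j0 ≤ 0
    · simp [elog, h0]
    · push_neg at h0
      rw [elog, if_neg (not_le.mpr h0)]
      rw [show (0:EReal) - ((Real.log (lam j0) : ℝ) : EReal)
          = ((-Real.log (lam j0) : ℝ) : EReal) by
        rw [EReal.coe_neg]; exact (zero_sub _)]
      rw [EReal.coe_le_coe_iff]
      have : Real.log (lam j0) ≤ Real.log (1/(k:ℝ)) :=
        Real.log_le_log h0 hj0
      rw [Real.log_div one_ne_zero (ne_of_gt hkpos), Real.log_one] at this
      linarith
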